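/- If Q is Metzler (Q x y ≥ 0 for all x ≠ y), then for every real t ≥ 0 and all x y : ι, 0 ≤ (Matrix.exp ℝ (t • Q)) x y. (Nonnegativity of the transition semigroup, underlying Theorem 2.5(i) and Theorem 1.1(i) of the paper.) -/

import Mathlib

/-- Mathlib's exponential, specialized to real matrices (`Matrix.exp ℝ`). -/
noncomputable def Matrix.exp (𝕂 : Type*) [Field 𝕂] {ι : Type*} [Fintype ι] [DecidableEq ι]
    [Algebra 𝕂 ℝ] (A : Matrix ι ι ℝ) : Matrix ι ι ℝ :=
  NormedSpace.exp A

section aux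

attribute [local instance] Matrix.linftyOpNormedRing Matrix.linftyOpNormedAlgebra

variable {ι : Type*} [Fintype ι] [DecidableEq ι]

lemma pow_entry_nonneg {M : Matrix ι ι ℝ} (h : ∀ x y, 0 ≤ M x y) :
    ∀ n : ℕ, ∀ x y, 0 ≤ (M ^ n) x y := by
  intro n
  induction n with
  | zero => intro x y; simp [Matrix.one_apply]; positivity
  | succ n ih =>
    intro x y
    rw [pow_succ, Matrix.mul_apply]
    exact Finset.sum_nonneg fun z _ => mul_nonneg (ih x z) (h z y)

lemma exp_entry_nonneg {M : Matrix ι ι ℝ} (h : ∀ x y, 0 ≤ M x y) (x y : ι) :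
    0 ≤ NormedSpace.exp M x y := by
  rw [NormedSpace.exp_eq_tsum (𝕂 := ℝ)]
  have hs : Summable fun n : ℕ => ((n.factorial : ℝ)⁻¹ • M ^ n) :=
    NormedSpace.expSeries_summable' (𝕂 := ℝ) M
  have hs1 : Summable fun n : ℕ => ((n.factorial : ℝ)⁻¹ • M ^ n) x :=
    Pi.summable.mp hs x
  show 0 ≤ (∑' n : ℕ, (n.factorial : ℝ)⁻¹ • M ^ n) x y
  erw [tsum_apply hs, tsum_apply hs1]
  exact tsum_nonneg fun n => by
    simp only [Matrix.smul_apply, smul_eq_mul]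
    exact mul_nonneg (by positivity) (pow_entry_nonneg h n x y)

lemma exp_smul_one (c : ℝ) :
    NormedSpace.exp (c • (1 : Matrix ι ι ℝ)) = Real.exp c • (1 : Matrix ι ι ℝ) := by
  have h : (c • (1 : Matrix ι ι ℝ)) = algebraMap ℝ (Matrix ι ι ℝ) c :=
    (Algebra.algebraMap_eq_smul_one c).symm
  erw [h, ← NormedSpace.algebraMap_exp_comm, Algebra.algebraMap_eq_smul_one,
    Real.exp_eq_exp_ℝ]

lemma matrix_exp_nonneg_of_metzler_aux [Nonempty ι]
    (Q : Matrix ι ι ℝ) (hQ : ∀ x y, x ≠ y → Q x y ≥ 0) :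
    ∀ t : ℝ, 0 ≤ t → ∀ x y : ι, 0 ≤ NormedSpace.exp (t • Q) x y := by
  intro t ht x y
  obtain ⟨c, hc⟩ : ∃ c : ℝ, ∀ x y, 0 ≤ (t • Q + c • (1 : Matrix ι ι ℝ)) x y := by
    refine ⟨Finset.univ.sup' Finset.univ_nonempty (fun z => -(t * Q z z)), fun a b => ?_⟩
    simp only [Matrix.add_apply, Matrix.smul_apply, Matrix.one_apply, smul_eq_mul]
    by_cases hab : a = b
    · subst hab
      rw [if_pos rfl, mul_one]
      have := Finset.le_sup' (fun z => -(t * Q z z)) (Finset.mem_univ a)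
      linarith
    · rw [if_neg hab, mul_zero, add_zero]
      exact mul_nonneg ht (hQ a b hab)
  have hcomm : Commute (t • Q) (c • (1 : Matrix ι ι ℝ)) := by
    simp only [Commute, SemiconjBy, smul_mul_assoc, mul_smul_comm, mul_one, one_mul]
    rw [smul_comm]
  have hexp : NormedSpace.exp (t • Q + c • (1 : Matrix ι ι ℝ))
      = NormedSpace.exp (t • Q) * NormedSpace.exp (c • (1 : Matrix ι ι ℝ)) :=
    Matrix.exp_add_of_commute _ _ hcomm
  have key : NormedSpace.exp (t • Q)
      = Real.exp (-c) • NormedSpace.exp (t • Q + c • (1 : Matrix ι ι ℝ)) := by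
    rw [hexp, exp_smul_one, mul_smul_comm, mul_one, smul_smul, ← Real.exp_add]
    simp
  rw [key]
  have := exp_entry_nonneg hc x y
  simpa using mul_nonneg (Real.exp_nonneg (-c)) this

end aux

/-- If `Q` is Metzler (`Q x y ≥ 0` for all `x ≠ y`), then the transition semigroup
`t ↦ exp (t • Q)` has nonnegative entries for every `t ≥ 0`. -/
theorem matrix_exp_nonneg_of_metzler {ι : Type*} [Fintype ι] [DecidableEq ι] [Nonempty ι]
    (Q : Matrix ι ι ℝ) (hQ : ∀ x y, x ≠ y → Q x y ≥ 0) :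
    ∀ t : ℝ, 0 ≤ t → ∀ x y : ι, 0 ≤ Matrix.exp ℝ (t • Q) x y :=
  matrix_exp_nonneg_of_metzler_aux Q hQ
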